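/- For each fixed β ∈ (0, 1/2) there exists a positive real constant d₃ such that ( (1/R²) · 4π·∫₁^{R_β(R)} ρ²/√(ρ²−1) dρ ) / ( E(R)^{1−2β} / |log E(R)| ) → d₃ as R → ∞. In particular, any E(R)^β-Lipschitz two-valued graph which agrees with the catenoid outside the disk of radius R_β(R) must miss a portion of the catenoid of scale-invariant area comparable to E^{1−2β}/|log E|. -/

import Mathlib

open MeasureTheory Filter
open Set

/-- The scale-invariant cylindrical tilt-excess of the 2-dimensional catenoid
`{(x,y,z) : √(x²+y²) = cosh z}` in the cylinder of radius `R`, relative to the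
horizontal plane `{z = 0}`. -/
noncomputable def catExcess (R : ℝ) : ℝ :=
  (4 / (Real.pi * R ^ 2)) *
    ∫ ρ in (1:ℝ)..R, ρ * (2 - 2 * Real.sqrt (ρ ^ 2 - 1) / ρ) * (ρ / Real.sqrt (ρ ^ 2 - 1))

/-- The radius `R_β(R)`, determined by `1/√(R_β² − 1) = E(R)^β`,
i.e. `R_β = √(1 + E(R)^(−2β))`. -/
noncomputable def Rbeta (β R : ℝ) : ℝ :=
  Real.sqrt (1 + catExcess R ^ (-(2 * β)))

noncomputable def catG (ρ : ℝ) : ℝ :=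
  (ρ * Real.sqrt (ρ ^ 2 - 1) + Real.log (ρ + Real.sqrt (ρ ^ 2 - 1))) / 2

lemma catG_one : catG 1 = 0 := by
  simp [catG]

lemma catG_deriv {ρ : ℝ} (hρ : 1 < ρ) :
    HasDerivAt catG (ρ ^ 2 / Real.sqrt (ρ ^ 2 - 1)) ρ := by
  have h1 : (0:ℝ) < ρ ^ 2 - 1 := by nlinarith
  have hs : 0 < Real.sqrt (ρ ^ 2 - 1) := Real.sqrt_pos.2 h1
  set s := Real.sqrt (ρ ^ 2 - 1) with hsdef
  have hsq : s ^ 2 = ρ ^ 2 - 1 := Real.sq_sqrt h1.le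
  have hd1 : HasDerivAt (fun x : ℝ => x ^ 2 - 1) (2 * ρ) ρ := by
    simpa using ((hasDerivAt_pow 2 ρ).sub_const 1)
  have hd2 : HasDerivAt (fun x : ℝ => Real.sqrt (x ^ 2 - 1)) (ρ / s) ρ := by
    have := hd1.sqrt (by positivity)
    convert this using 1
    field_simp
    ring
  have hd3 : HasDerivAt (fun x : ℝ => x * Real.sqrt (x ^ 2 - 1)) (s + ρ * (ρ / s)) ρ := by
    exact ((hasDerivAt_id' ρ).mul hd2).congr_deriv (by rw [one_mul])
  have hd4 : HasDerivAt (fun x : ℝ => x + Real.sqrt (x ^ 2 - 1)) (1 + ρ / s) ρ :=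
    (hasDerivAt_id ρ).add hd2
  have hne : ρ + s ≠ 0 := by positivity
  have hd5 : HasDerivAt (fun x : ℝ => Real.log (x + Real.sqrt (x ^ 2 - 1)))
      ((1 + ρ / s) / (ρ + s)) ρ := hd4.log hne
  have := (hd3.add hd5).div_const 2
  refine this.congr_deriv ?_
  have e1 : (1 + ρ / s) / (ρ + s) = 1 / s := by
    rw [div_eq_div_iff hne hs.ne']
    field_simp
    ring
  rw [e1, div_eq_div_iff (by norm_num) hs.ne']
  field_simp
  linear_combination hsq

lemma catG_cont : ContinuousOn catG (Ici (1:ℝ)) := by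
  have h1 : Continuous fun ρ : ℝ => ρ * Real.sqrt (ρ ^ 2 - 1) :=
    continuous_id.mul ((continuous_pow 2).sub continuous_const).sqrt
  have h2 : Continuous fun ρ : ℝ => ρ + Real.sqrt (ρ ^ 2 - 1) :=
    continuous_id.add ((continuous_pow 2).sub continuous_const).sqrt
  refine (h1.continuousOn.add (ContinuousOn.log h2.continuousOn ?_)).div_const 2
  intro x hx
  have : (1:ℝ) ≤ x := hx
  positivity

lemma cat_integrand_integrable {R : ℝ} (hR : 1 ≤ R) :
    IntervalIntegrable (fun ρ : ℝ => ρ ^ 2 / Real.sqrt (ρ ^ 2 - 1)) volume 1 R := by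
  have hmeas : Measurable fun ρ : ℝ => ρ ^ 2 / Real.sqrt (ρ ^ 2 - 1) :=
    (measurable_id.pow_const 2).div
      (Real.continuous_sqrt.measurable.comp ((measurable_id.pow_const 2).sub measurable_const))
  have base : IntervalIntegrable (fun ρ : ℝ => ρ ^ 2 / Real.sqrt (ρ ^ 2 - 1)) volume 1 2 := by
    rw [intervalIntegrable_iff, uIoc_of_le (by norm_num : (1:ℝ) ≤ 2)]
    have hg : IntervalIntegrable (fun x : ℝ => 4 * (x - 1) ^ (-(1/2) : ℝ)) volume 1 2 := by
      have h0 := intervalIntegral.intervalIntegrable_rpow' (r := -(1/2)) (by norm_num) (a := 0) (b := 1)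
      have h1 := h0.comp_sub_right 1
      have h2 : IntervalIntegrable (fun x : ℝ => (x - 1) ^ (-(1/2) : ℝ)) volume 1 2 := by
        convert h1 using 2 <;> norm_num
      exact h2.const_mul 4
    have hgint : IntegrableOn (fun x : ℝ => 4 * (x - 1) ^ (-(1/2) : ℝ)) (Ioc 1 2) volume := by
      rw [intervalIntegrable_iff, uIoc_of_le (by norm_num : (1:ℝ) ≤ 2)] at hg
      exact hg
    refine hgint.mono' hmeas.aestronglyMeasurable ?_
    rw [ae_restrict_iff' measurableSet_Ioc]
    refine Filter.Eventually.of_forall fun x hx => ?_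
    obtain ⟨hx1, hx2⟩ := hx
    have hx1' : (0:ℝ) < x - 1 := by linarith
    have hsub : (0:ℝ) < x ^ 2 - 1 := by nlinarith
    have hs : 0 < Real.sqrt (x ^ 2 - 1) := Real.sqrt_pos.2 hsub
    rw [Real.norm_eq_abs, abs_of_nonneg (by positivity)]
    have hfac : Real.sqrt (x ^ 2 - 1) = Real.sqrt (x - 1) * Real.sqrt (x + 1) := by
      rw [← Real.sqrt_mul hx1'.le]; ring_nf
    have h2le : Real.sqrt 2 ≤ Real.sqrt (x + 1) := Real.sqrt_le_sqrt (by linarith)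
    have hrpow : (x - 1) ^ (-(1/2) : ℝ) = 1 / Real.sqrt (x - 1) := by
      rw [Real.rpow_neg hx1'.le, ← Real.sqrt_eq_rpow, one_div]
    have h1 : (1:ℝ) ≤ Real.sqrt (x + 1) := by
      have := Real.sqrt_le_sqrt (show (1:ℝ) ≤ x + 1 by linarith)
      rwa [Real.sqrt_one] at this
    have hx4 : x ^ 2 ≤ 4 := by nlinarith
    rw [hfac, hrpow, mul_one_div, div_le_div_iff₀ (by positivity) (by positivity)]
    nlinarith [mul_nonneg (Real.sqrt_nonneg (x - 1)) (sub_nonneg.2 h1),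
      mul_nonneg (Real.sqrt_nonneg (x - 1)) (sub_nonneg.2 hx4)]
  rcases le_or_gt R 2 with h | h
  · refine base.mono_set ?_
    rw [uIcc_of_le hR, uIcc_of_le (by norm_num : (1:ℝ) ≤ 2)]
    exact Icc_subset_Icc le_rfl h
  · refine base.trans ?_
    apply ContinuousOn.intervalIntegrable
    rw [uIcc_of_le h.le]
    apply ContinuousOn.div
    · exact (continuous_pow 2).continuousOn
    · exact (((continuous_pow 2).sub continuous_const).sqrt).continuousOn
    · intro x hx
      have : (2:ℝ) ≤ x := hx.1
      have : (0:ℝ) < x ^ 2 - 1 := by nlinarith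
      exact (Real.sqrt_pos.2 this).ne'

lemma cat_integral_eq {R : ℝ} (hR : 1 ≤ R) :
    (∫ ρ in (1:ℝ)..R, ρ ^ 2 / Real.sqrt (ρ ^ 2 - 1)) = catG R := by
  have h := intervalIntegral.integral_eq_sub_of_hasDeriv_right_of_le hR
    (catG_cont.mono (Icc_subset_Ici_self))
    (fun x hx => (catG_deriv hx.1).hasDerivWithinAt)
    (cat_integrand_integrable hR)
  rw [h, catG_one, sub_zero]

lemma catExcess_eq {R : ℝ} (hR : 1 ≤ R) :
    catExcess R = (4 / (Real.pi * R ^ 2)) * (2 * catG R - R ^ 2 + 1) := by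
  unfold catExcess
  congr 1
  have hcongr : (∫ ρ in (1:ℝ)..R, ρ * (2 - 2 * Real.sqrt (ρ ^ 2 - 1) / ρ) * (ρ / Real.sqrt (ρ ^ 2 - 1)))
      = ∫ ρ in (1:ℝ)..R, (2 * (ρ ^ 2 / Real.sqrt (ρ ^ 2 - 1)) - 2 * ρ) := by
    apply intervalIntegral.integral_congr_ae
    refine Filter.Eventually.of_forall fun x hx => ?_
    rw [Set.uIoc_of_le hR] at hx
    have hx1 : 1 < x := hx.1
    have hsub : (0:ℝ) < x ^ 2 - 1 := by nlinarith
    have hs : 0 < Real.sqrt (x ^ 2 - 1) := Real.sqrt_pos.2 hsub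
    field_simp
  rw [hcongr, intervalIntegral.integral_sub ((cat_integrand_integrable hR).const_mul 2)
    (Continuous.intervalIntegrable (by continuity) 1 R),
    intervalIntegral.integral_const_mul, cat_integral_eq hR]
  have : (∫ ρ in (1:ℝ)..R, 2 * ρ) = R ^ 2 - 1 := by
    rw [intervalIntegral.integral_const_mul, integral_id]
    ring
  rw [this]
  ring

noncomputable def catS (R : ℝ) : ℝ := Real.sqrt (1 - 1 / R ^ 2)
noncomputable def catC (R : ℝ) : ℝ := Real.log (1 + catS R) + 1 - 1 / (1 + catS R)
noncomputable def psi (R : ℝ) : ℝ := R ^ 2 * catExcess R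

lemma catS_nonneg (R : ℝ) : 0 ≤ catS R := Real.sqrt_nonneg _

lemma catS_sq {R : ℝ} (hR : 1 < R) : catS R ^ 2 = 1 - 1 / R ^ 2 := by
  apply Real.sq_sqrt
  have h0 : (0:ℝ) < R := by linarith
  rw [sub_nonneg, div_le_one (by positivity)]
  nlinarith

lemma sqrt_sub_one_eq {R : ℝ} (hR : 1 < R) : Real.sqrt (R ^ 2 - 1) = R * catS R := by
  have h0 : (0:ℝ) < R := by linarith
  rw [show R ^ 2 - 1 = R ^ 2 * (1 - 1 / R ^ 2) by field_simp,
    Real.sqrt_mul (by positivity), Real.sqrt_sq h0.le]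
  rfl

lemma twoG_eq {R : ℝ} (hR : 1 < R) :
    2 * catG R - R ^ 2 + 1 = Real.log R + catC R := by
  have h0 : (0:ℝ) < R := by linarith
  have hs0 := catS_nonneg R
  have h1s : (0:ℝ) < 1 + catS R := by linarith
  have hsq' : R ^ 2 * catS R ^ 2 = R ^ 2 - 1 := by
    rw [catS_sq hR]; field_simp
  have hlog : Real.log (R + Real.sqrt (R ^ 2 - 1)) = Real.log R + Real.log (1 + catS R) := by
    rw [sqrt_sub_one_eq hR, show R + R * catS R = R * (1 + catS R) by ring,
      Real.log_mul h0.ne' h1s.ne']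
  unfold catG catC
  rw [hlog, sqrt_sub_one_eq hR]
  have key : R * (R * catS R) - R ^ 2 + 1 = 1 - 1 / (1 + catS R) := by
    field_simp
    linear_combination hsq'
  linarith [key]

lemma psi_eq {R : ℝ} (hR : 1 < R) : psi R = 4 / Real.pi * (Real.log R + catC R) := by
  have h0 : (0:ℝ) < R := by linarith
  have hπ := Real.pi_pos
  unfold psi
  rw [catExcess_eq hR.le, ← twoG_eq hR]
  field_simp

lemma catS_tendsto : Tendsto catS atTop (nhds 1) := by
  have h1 : Tendsto (fun R : ℝ => 1 - 1 / R ^ 2) atTop (nhds 1) := by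
    have : Tendsto (fun R : ℝ => 1 / R ^ 2) atTop (nhds 0) := by
      simp only [one_div]
      exact (tendsto_pow_atTop two_ne_zero).inv_tendsto_atTop
    simpa using tendsto_const_nhds.sub this
  have := (Real.continuous_sqrt.continuousAt (x := (1:ℝ))).tendsto.comp h1
  rw [Real.sqrt_one] at this
  exact this.congr fun R => by simp [catS, Function.comp, one_div]

lemma catC_tendsto : Tendsto catC atTop (nhds (Real.log 2 + 1 / 2)) := by
  have h2 : Tendsto (fun R => 1 + catS R) atTop (nhds 2) := by
    have := (tendsto_const_nhds : Tendsto (fun _ : ℝ => (1:ℝ)) atTop (nhds 1)).add catS_tendsto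
    norm_num at this
    exact this
  have hlog : Tendsto (fun R => Real.log (1 + catS R)) atTop (nhds (Real.log 2)) :=
    ((Real.continuousAt_log two_ne_zero).tendsto).comp h2
  have hdiv : Tendsto (fun R => 1 / (1 + catS R)) atTop (nhds (1 / 2)) :=
    tendsto_const_nhds.div h2 two_ne_zero
  have := (hlog.add (tendsto_const_nhds (x := (1:ℝ)))).sub hdiv
  unfold catC
  convert this using 2 <;> ring

lemma psi_div_log_tendsto :
    Tendsto (fun R => psi R / Real.log R) atTop (nhds (4 / Real.pi)) := by
  have base : Tendsto (fun R => 4 / Real.pi * (1 + catC R / Real.log R)) atTop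
      (nhds (4 / Real.pi)) := by
    have h0 : Tendsto (fun R => catC R / Real.log R) atTop (nhds 0) :=
      catC_tendsto.div_atTop Real.tendsto_log_atTop
    have := ((tendsto_const_nhds (x := (1:ℝ))).add h0).const_mul (4 / Real.pi)
    norm_num at this
    convert this using 2 <;> ring
  refine Tendsto.congr' ?_ base
  filter_upwards [eventually_gt_atTop (1:ℝ)] with R hR
  have hlog : 0 < Real.log R := Real.log_pos hR
  rw [psi_eq hR]
  field_simp

lemma psi_tendsto_atTop : Tendsto psi atTop atTop := by
  have h := psi_div_log_tendsto.pos_mul_atTop (by positivity) Real.tendsto_log_atTop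
  refine Tendsto.congr' ?_ h
  filter_upwards [eventually_gt_atTop (1:ℝ)] with R hR
  have hlog : Real.log R ≠ 0 := (Real.log_pos hR).ne'
  field_simp

lemma catExcess_eq_psi {R : ℝ} (hR : 0 < R) : catExcess R = psi R / R ^ 2 := by
  unfold psi
  field_simp

lemma catExcess_tendsto : Tendsto catExcess atTop (nhdsWithin 0 (Set.Ioi 0)) := by
  have hnhds : Tendsto catExcess atTop (nhds 0) := by
    have hlogdiv : Tendsto (fun R : ℝ => Real.log R / R) atTop (nhds 0) :=
      Real.isLittleO_log_id_atTop.tendsto_div_nhds_zero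
    have hinv : Tendsto (fun R : ℝ => 1 / R) atTop (nhds (0:ℝ)) := by
      simpa [one_div] using (tendsto_inv_atTop_zero : Tendsto (fun R : ℝ => R⁻¹) atTop (nhds 0))
    have hmul := (psi_div_log_tendsto.mul (hlogdiv.mul hinv))
    rw [show (4 / Real.pi) * (0 * 0) = 0 by ring] at hmul
    refine Tendsto.congr' ?_ hmul
    filter_upwards [eventually_gt_atTop (1:ℝ)] with R hR
    have hlog : Real.log R ≠ 0 := (Real.log_pos hR).ne'
    have hR0 : R ≠ 0 := by positivity
    rw [catExcess_eq_psi (by linarith)]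
    rw [div_mul_div_comm, div_mul_div_comm, mul_one,
      show psi R * Real.log R / (Real.log R * (R * R)) = psi R / R ^ 2 by
        rw [div_eq_div_iff (by positivity) (by positivity : (R:ℝ) ^ 2 ≠ 0)]
        ring]
  refine tendsto_nhdsWithin_of_tendsto_nhds_of_eventually_within _ hnhds ?_
  filter_upwards [psi_tendsto_atTop.eventually_gt_atTop 0, eventually_gt_atTop (1:ℝ)]
    with R hψ hR
  rw [catExcess_eq_psi (by linarith)]
  exact div_pos hψ (by positivity)

lemma B_tendsto :
    Tendsto (fun R => |Real.log (catExcess R)| / (R ^ 2 * catExcess R)) atTop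
      (nhds (Real.pi / 2)) := by
  have t1 : Tendsto (fun R => Real.log R / psi R) atTop (nhds (Real.pi / 4)) := by
    have := psi_div_log_tendsto.inv₀ (by positivity)
    simpa [inv_div] using this
  have t2 : Tendsto (fun R => Real.log (psi R) / psi R) atTop (nhds 0) := by
    have := Real.isLittleO_log_id_atTop.tendsto_div_nhds_zero.comp psi_tendsto_atTop
    simpa [Function.comp_def] using this
  have base : Tendsto (fun R => 2 * (Real.log R / psi R) - Real.log (psi R) / psi R)
      atTop (nhds (Real.pi / 2)) := by
    have := (t1.const_mul 2).sub t2
    norm_num at this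
    convert this using 2 <;> ring
  refine Tendsto.congr' ?_ base
  have he_pos : ∀ᶠ R in atTop, 0 < catExcess R := by
    have : catExcess ⁻¹' (Set.Ioi 0) ∈ atTop := catExcess_tendsto self_mem_nhdsWithin
    filter_upwards [this] with R hR using hR
  have he_lt : ∀ᶠ R in atTop, catExcess R < 1 :=
    catExcess_tendsto.eventually ((eventually_lt_nhds zero_lt_one).filter_mono nhdsWithin_le_nhds)
  filter_upwards [he_pos, he_lt, eventually_gt_atTop (1:ℝ)] with R hpos hlt hR
  have hR0 : (0:ℝ) < R := by linarith
  have hψ : 0 < psi R := by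
    have := catExcess_eq_psi hR0 ▸ hpos
    unfold psi; positivity
  have hlogneg : Real.log (catExcess R) < 0 := Real.log_neg hpos hlt
  have hloge : Real.log (catExcess R) = Real.log (psi R) - 2 * Real.log R := by
    rw [catExcess_eq_psi hR0, Real.log_div hψ.ne' (by positivity), Real.log_pow]
    norm_num
  rw [show R ^ 2 * catExcess R = psi R by rw [catExcess_eq_psi hR0]; field_simp,
    abs_of_neg hlogneg, hloge]
  rw [neg_sub, sub_div]
  ring_nf

lemma A_tendsto {β : ℝ} (hβ0 : 0 < β) (hβ1 : β < 1/2) :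
    Tendsto (fun R => catG (Rbeta β R) * catExcess R ^ (2 * β)) atTop (nhds (1/2)) := by
  have h2β : (0:ℝ) < 2 * β := by linarith
  -- p := e ^ (2β) tends to 0
  have hp : Tendsto (fun R => catExcess R ^ (2 * β)) atTop (nhds 0) := by
    have hc : ContinuousAt (fun x : ℝ => x ^ (2 * β)) 0 :=
      Real.continuousAt_rpow_const 0 (2 * β) (Or.inr h2β.le)
    have := hc.tendsto.comp (catExcess_tendsto.mono_right nhdsWithin_le_nhds)
    simpa [Function.comp_def, Real.zero_rpow h2β.ne'] using this
  have hlogmul : Tendsto (fun R => Real.log (catExcess R) * catExcess R ^ (2 * β)) atTop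
      (nhds 0) := by
    have := (tendsto_log_mul_rpow_nhdsGT_zero h2β).comp catExcess_tendsto
    simpa [Function.comp_def] using this
  have hsqrt1 : Tendsto (fun R => Real.sqrt (catExcess R ^ (2 * β) + 1)) atTop (nhds 1) := by
    have h1 : Tendsto (fun R => catExcess R ^ (2 * β) + 1) atTop (nhds 1) := by
      simpa using hp.add (tendsto_const_nhds (x := (1:ℝ)))
    have := (Real.continuous_sqrt.continuousAt (x := (1:ℝ))).tendsto.comp h1
    simpa [Function.comp_def] using this
  have hloglim : Tendsto (fun R => Real.log (Real.sqrt (catExcess R ^ (2 * β) + 1) + 1)) atTop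
      (nhds (Real.log 2)) := by
    have h2 : Tendsto (fun R => Real.sqrt (catExcess R ^ (2 * β) + 1) + 1) atTop (nhds 2) := by
      have := hsqrt1.add (tendsto_const_nhds (x := (1:ℝ)))
      norm_num at this
      exact this
    exact (Real.continuousAt_log two_ne_zero).tendsto.comp h2
  have base : Tendsto (fun R =>
      (Real.sqrt (catExcess R ^ (2 * β) + 1) +
        (-β * (Real.log (catExcess R) * catExcess R ^ (2 * β)) +
          catExcess R ^ (2 * β) * Real.log (Real.sqrt (catExcess R ^ (2 * β) + 1) + 1))) / 2)
      atTop (nhds (1/2)) := by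
    have := (hsqrt1.add ((hlogmul.const_mul (-β)).add (hp.mul hloglim))).div_const 2
    norm_num at this
    convert this using 2 <;> ring
  refine Tendsto.congr' ?_ base
  have he_pos : ∀ᶠ R in atTop, 0 < catExcess R := by
    have : catExcess ⁻¹' (Set.Ioi 0) ∈ atTop := catExcess_tendsto self_mem_nhdsWithin
    filter_upwards [this] with R hR using hR
  filter_upwards [he_pos] with R he
  set e := catExcess R with hedef
  set u := e ^ (-β) with hudef
  set p := e ^ (2 * β) with hpdef
  have hu_pos : 0 < u := Real.rpow_pos_of_pos he _
  have hp_pos : 0 < p := Real.rpow_pos_of_pos he _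
  have hq_pos : 0 < e ^ (-(2 * β)) := Real.rpow_pos_of_pos he _
  have hu_sq : u ^ 2 = e ^ (-(2 * β)) := by
    rw [hudef, ← Real.rpow_natCast (e ^ (-β)) 2, ← Real.rpow_mul he.le]
    congr 1
    push_cast
    ring
  have hq_mul : e ^ (-(2 * β)) * p = 1 := by
    rw [hpdef, ← Real.rpow_add he]
    norm_num
  have hep : u * p = e ^ β := by
    rw [hudef, hpdef, ← Real.rpow_add he]
    congr 1; ring
  have heb_sq : (e ^ β) ^ 2 = p := by
    rw [hpdef, ← Real.rpow_natCast (e ^ β) 2, ← Real.rpow_mul he.le]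
    congr 1; push_cast; ring
  have hRb_sq : Rbeta β R ^ 2 = 1 + e ^ (-(2 * β)) := by
    rw [Rbeta, Real.sq_sqrt (by positivity)]
  have hsqrt_u : Real.sqrt (Rbeta β R ^ 2 - 1) = u := by
    rw [hRb_sq, add_sub_cancel_left, ← hu_sq, Real.sqrt_sq hu_pos.le]
  have hRb_pos : 0 < Rbeta β R := by
    rw [Rbeta]; positivity
  -- f1 : Rbeta * u * p = sqrt (p + 1)
  have f1 : Rbeta β R * u * p = Real.sqrt (p + 1) := by
    rw [Rbeta, mul_assoc, hep, ← Real.sqrt_sq (Real.rpow_nonneg he.le β), heb_sq,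
      ← Real.sqrt_mul (by positivity)]
    congr 1
    rw [add_mul, one_mul, hq_mul]
  -- hfac : sqrt(1 + e^{-2β}) = u * sqrt (p+1)
  have hfac : Real.sqrt (1 + e ^ (-(2 * β))) = u * Real.sqrt (p + 1) := by
    rw [← Real.sqrt_sq hu_pos.le, ← Real.sqrt_mul (by positivity)]
    congr 1
    rw [hu_sq]
    have : e ^ (-(2 * β)) * (p + 1) = e ^ (-(2 * β)) * p + e ^ (-(2 * β)) := by ring
    rw [this, hq_mul]
  have f2 : Real.log (Rbeta β R + u) =
      -β * Real.log e + Real.log (Real.sqrt (p + 1) + 1) := by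
    have hRbu : Rbeta β R + u = u * (Real.sqrt (p + 1) + 1) := by
      rw [Rbeta, hfac]; ring
    rw [hRbu, Real.log_mul hu_pos.ne' (by positivity), hudef, Real.log_rpow he]
  -- final algebra
  have goal_eq : catG (Rbeta β R) * p =
      (Real.sqrt (p + 1) + (-β * (Real.log e * p) + p * Real.log (Real.sqrt (p + 1) + 1))) / 2 := by
    unfold catG
    rw [hsqrt_u, f2]
    field_simp
    linear_combination f1
  exact goal_eq.symm

/-- For each fixed `β ∈ (0,1/2)` there is a positive constant `d₃` such that the
scale-invariant area `(1/R²)·4π·∫₁^{R_β} ρ²/√(ρ²−1) dρ` of the portion of the catenoid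
over the disk of radius `R_β(R)`, divided by `E(R)^{1−2β}/|log E(R)|`, tends to `d₃`
as `R → ∞`. -/
theorem catenoid_missed_area_asymptotics (β : ℝ) (hβ : β ∈ Set.Ioo (0:ℝ) (1/2)) :
    ∃ d₃ : ℝ, 0 < d₃ ∧
      Tendsto
        (fun R : ℝ =>
          ((1 / R ^ 2) * (4 * Real.pi * ∫ ρ in (1:ℝ)..(Rbeta β R), ρ ^ 2 / Real.sqrt (ρ ^ 2 - 1))) /
            (catExcess R ^ (1 - 2 * β) / |Real.log (catExcess R)|))
        atTop (nhds d₃) := by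
  obtain ⟨hβ0, hβ1⟩ := hβ
  have hπ := Real.pi_pos
  refine ⟨Real.pi ^ 2, by positivity, ?_⟩
  have base := ((A_tendsto hβ0 hβ1).mul B_tendsto).const_mul (4 * Real.pi)
  have hval : 4 * Real.pi * (1 / 2 * (Real.pi / 2)) = Real.pi ^ 2 := by ring
  rw [hval] at base
  refine Tendsto.congr' ?_ base
  have he_pos : ∀ᶠ R in atTop, 0 < catExcess R := by
    have : catExcess ⁻¹' (Set.Ioi 0) ∈ atTop := catExcess_tendsto self_mem_nhdsWithin
    filter_upwards [this] with R hR using hR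
  have he_lt : ∀ᶠ R in atTop, catExcess R < 1 :=
    catExcess_tendsto.eventually ((eventually_lt_nhds zero_lt_one).filter_mono nhdsWithin_le_nhds)
  filter_upwards [he_pos, he_lt, eventually_gt_atTop (1:ℝ)] with R he hlt hR
  have hR0 : (0:ℝ) < R := by linarith
  have hRb1 : (1:ℝ) ≤ Rbeta β R := by
    have h0 : (0:ℝ) ≤ catExcess R ^ (-(2 * β)) := Real.rpow_nonneg he.le _
    have := Real.sqrt_le_sqrt (show (1:ℝ) ≤ 1 + catExcess R ^ (-(2 * β)) by linarith)
    rwa [Real.sqrt_one] at this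
  rw [cat_integral_eq hRb1]
  have hL : 0 < |Real.log (catExcess R)| := abs_pos.2 (Real.log_neg he hlt).ne
  have hsplit : catExcess R ^ (1 - 2 * β) = catExcess R * (catExcess R ^ (2 * β))⁻¹ := by
    rw [show (1:ℝ) - 2 * β = 1 + -(2 * β) by ring, Real.rpow_add he, Real.rpow_one,
      Real.rpow_neg he.le]
  rw [hsplit]
  have hp := Real.rpow_pos_of_pos he (2 * β)
  field_simp
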